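/- For α, β > 0, the function B̃(t,x) = 2√2 arctan((β/α) sin(α(x+δt))/cosh(β(x+γt))), with δ = α²−3β², γ = 3α²−β², and B = ∂_x B̃, satisfies the identity ∂_x² B + ∂_t B̃ + B³ = 0 for all (t,x). -/

import Mathlib

noncomputable def tildeB (α β t x : ℝ) : ℝ :=
  2 * Real.sqrt 2 *
    Real.arctan ((β / α) * Real.sin (α * (x + (α ^ 2 - 3 * β ^ 2) * t)) /
      Real.cosh (β * (x + (3 * α ^ 2 - β ^ 2) * t)))

noncomputable def breather (α β t x : ℝ) : ℝ := deriv (tildeB α β t) x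

namespace MKdVAux

noncomputable def S (α β t x : ℝ) : ℝ := Real.sin (α * (x + (α ^ 2 - 3 * β ^ 2) * t))
noncomputable def C (α β t x : ℝ) : ℝ := Real.cos (α * (x + (α ^ 2 - 3 * β ^ 2) * t))
noncomputable def H (α β t x : ℝ) : ℝ := Real.cosh (β * (x + (3 * α ^ 2 - β ^ 2) * t))
noncomputable def SH (α β t x : ℝ) : ℝ := Real.sinh (β * (x + (3 * α ^ 2 - β ^ 2) * t))
noncomputable def D (α β t x : ℝ) : ℝ := α ^ 2 * H α β t x ^ 2 + β ^ 2 * S α β t x ^ 2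
noncomputable def N (α β t x : ℝ) : ℝ :=
  α * C α β t x * H α β t x - β * S α β t x * SH α β t x
noncomputable def Nx (α β t x : ℝ) : ℝ := -((α ^ 2 + β ^ 2) * S α β t x * H α β t x)
noncomputable def Dx (α β t x : ℝ) : ℝ :=
  2 * α * β * (α * H α β t x * SH α β t x + β * S α β t x * C α β t x)
noncomputable def Nxx (α β t x : ℝ) : ℝ :=
  -((α ^ 2 + β ^ 2) * (α * C α β t x * H α β t x + β * S α β t x * SH α β t x))
noncomputable def Dxx (α β t x : ℝ) : ℝ :=
  2 * α ^ 2 * β ^ 2 *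
    (SH α β t x ^ 2 + H α β t x ^ 2 + C α β t x ^ 2 - S α β t x ^ 2)
noncomputable def Bv (α β t x : ℝ) : ℝ :=
  2 * Real.sqrt 2 * α * β * N α β t x / D α β t x
noncomputable def B1v (α β t x : ℝ) : ℝ :=
  2 * Real.sqrt 2 * α * β * (Nx α β t x * D α β t x - N α β t x * Dx α β t x) /
    D α β t x ^ 2
noncomputable def B2v (α β t x : ℝ) : ℝ :=
  2 * Real.sqrt 2 * α * β *
    ((Nxx α β t x * D α β t x - N α β t x * Dxx α β t x) * D α β t x -
      2 * (Nx α β t x * D α β t x - N α β t x * Dx α β t x) * Dx α β t x) /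
    D α β t x ^ 3
noncomputable def Tv (α β t x : ℝ) : ℝ :=
  2 * Real.sqrt 2 * α * β *
    (α * (α ^ 2 - 3 * β ^ 2) * C α β t x * H α β t x -
      β * (3 * α ^ 2 - β ^ 2) * S α β t x * SH α β t x) / D α β t x

variable (α β t x : ℝ)

lemma hD_pos (hα : 0 < α) : 0 < D α β t x := by
  have h1 : 1 ≤ H α β t x := Real.one_le_cosh _
  have : 0 < α ^ 2 := by positivity
  have hs : 0 ≤ β ^ 2 * S α β t x ^ 2 := by positivity
  have h2 : (1:ℝ) ≤ H α β t x ^ 2 := by nlinarith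
  unfold D
  nlinarith

lemma hasDerivAt_S : HasDerivAt (fun x => S α β t x) (α * C α β t x) x := by
  have h : HasDerivAt (fun x : ℝ => α * (x + (α ^ 2 - 3 * β ^ 2) * t)) α x := by
    simpa using ((hasDerivAt_id x).add_const ((α ^ 2 - 3 * β ^ 2) * t)).const_mul α
  simpa [S, C, mul_comm] using h.sin

lemma hasDerivAt_C : HasDerivAt (fun x => C α β t x) (-(α * S α β t x)) x := by
  have h : HasDerivAt (fun x : ℝ => α * (x + (α ^ 2 - 3 * β ^ 2) * t)) α x := by
    simpa using ((hasDerivAt_id x).add_const ((α ^ 2 - 3 * β ^ 2) * t)).const_mul α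
  simpa [S, C, mul_comm] using h.cos

lemma hasDerivAt_H : HasDerivAt (fun x => H α β t x) (β * SH α β t x) x := by
  have h : HasDerivAt (fun x : ℝ => β * (x + (3 * α ^ 2 - β ^ 2) * t)) β x := by
    simpa using ((hasDerivAt_id x).add_const ((3 * α ^ 2 - β ^ 2) * t)).const_mul β
  simpa [H, SH, mul_comm] using h.cosh

lemma hasDerivAt_SH : HasDerivAt (fun x => SH α β t x) (β * H α β t x) x := by
  have h : HasDerivAt (fun x : ℝ => β * (x + (3 * α ^ 2 - β ^ 2) * t)) β x := by
    simpa using ((hasDerivAt_id x).add_const ((3 * α ^ 2 - β ^ 2) * t)).const_mul β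
  simpa [H, SH, mul_comm] using h.sinh

lemma hasDerivAt_N : HasDerivAt (fun x => N α β t x) (Nx α β t x) x := by
  have h := (((hasDerivAt_C α β t x).const_mul α).mul (hasDerivAt_H α β t x)).sub
    (((hasDerivAt_S α β t x).const_mul β).mul (hasDerivAt_SH α β t x))
  refine h.congr_deriv ?_
  symm
  unfold Nx; ring

lemma hasDerivAt_D : HasDerivAt (fun x => D α β t x) (Dx α β t x) x := by
  have h := (((hasDerivAt_H α β t x).pow 2).const_mul (α ^ 2)).add
    (((hasDerivAt_S α β t x).pow 2).const_mul (β ^ 2))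
  refine h.congr_deriv ?_
  symm
  unfold Dx; ring

lemma hasDerivAt_Nx : HasDerivAt (fun x => Nx α β t x) (Nxx α β t x) x := by
  have h := ((((hasDerivAt_S α β t x).const_mul (α ^ 2 + β ^ 2)).mul
    (hasDerivAt_H α β t x))).neg
  refine h.congr_deriv ?_
  symm
  unfold Nxx; ring

lemma hasDerivAt_Dx : HasDerivAt (fun x => Dx α β t x) (Dxx α β t x) x := by
  have h := ((((hasDerivAt_H α β t x).const_mul α).mul (hasDerivAt_SH α β t x)).add
    (((hasDerivAt_S α β t x).const_mul β).mul (hasDerivAt_C α β t x))).const_mul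
    (2 * α * β)
  refine h.congr_deriv ?_
  symm
  unfold Dxx; ring

lemma hasDerivAt_tildeB_x (hα : 0 < α) :
    HasDerivAt (tildeB α β t) (Bv α β t x) x := by
  have hα' : α ≠ 0 := ne_of_gt hα
  have hH0 : (0:ℝ) < H α β t x := by unfold H; exact Real.cosh_pos _
  have hu : HasDerivAt
      (fun x => (β / α) * S α β t x / H α β t x)
      (((β / α) * (α * C α β t x) * H α β t x -
        (β / α) * S α β t x * (β * SH α β t x)) / H α β t x ^ 2) x :=
    (((hasDerivAt_S α β t x).const_mul (β / α)).div (hasDerivAt_H α β t x) hH0.ne')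
  have ha := ((Real.hasDerivAt_arctan ((β / α) * S α β t x / H α β t x)).comp x hu)
  have h := ha.const_mul (2 * Real.sqrt 2)
  have heq : ∀ y : ℝ, tildeB α β t y =
      2 * Real.sqrt 2 * Real.arctan ((β / α) * S α β t y / H α β t y) := by
    intro y; rfl
  rw [show tildeB α β t = fun y =>
      2 * Real.sqrt 2 * Real.arctan ((β / α) * S α β t y / H α β t y) from
      funext heq]
  refine h.congr_deriv ?_
  symm
  unfold Bv N D
  have hD0 := (hD_pos α β t x hα).ne'
  field_simp

lemma hasDerivAt_Bv (hα : 0 < α) :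
    HasDerivAt (fun x => Bv α β t x) (B1v α β t x) x := by
  have hD0 := (hD_pos α β t x hα).ne'
  have h := ((hasDerivAt_N α β t x).const_mul (2 * Real.sqrt 2 * α * β)).div
    (hasDerivAt_D α β t x) hD0
  refine h.congr_deriv ?_
  symm
  unfold B1v
  field_simp

lemma hasDerivAt_B1v (hα : 0 < α) :
    HasDerivAt (fun x => B1v α β t x) (B2v α β t x) x := by
  have hD0 := (hD_pos α β t x hα).ne'
  have hnum : HasDerivAt
      (fun x => 2 * Real.sqrt 2 * α * β * (Nx α β t x * D α β t x - N α β t x * Dx α β t x))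
      (2 * Real.sqrt 2 * α * β *
        ((Nxx α β t x * D α β t x + Nx α β t x * Dx α β t x) -
         (Nx α β t x * Dx α β t x + N α β t x * Dxx α β t x))) x :=
    (((hasDerivAt_Nx α β t x).mul (hasDerivAt_D α β t x)).sub
      ((hasDerivAt_N α β t x).mul (hasDerivAt_Dx α β t x))).const_mul
      (2 * Real.sqrt 2 * α * β)
  have hden : HasDerivAt (fun x => D α β t x ^ 2)
      (2 * D α β t x ^ 1 * Dx α β t x) x := (hasDerivAt_D α β t x).pow 2
  have hden0 : D α β t x ^ 2 ≠ 0 := pow_ne_zero _ hD0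
  have h := hnum.div hden hden0
  refine h.congr_deriv ?_
  symm
  unfold B2v
  field_simp
  ring

lemma hasDerivAt_tildeB_t (hα : 0 < α) :
    HasDerivAt (fun t' => tildeB α β t' x) (Tv α β t x) t := by
  have hα' : α ≠ 0 := ne_of_gt hα
  have hH0 : (0:ℝ) < H α β t x := by unfold H; exact Real.cosh_pos _
  have h1 : HasDerivAt (fun t' : ℝ => α * (x + (α ^ 2 - 3 * β ^ 2) * t'))
      (α * (α ^ 2 - 3 * β ^ 2)) t := by
    simpa [mul_assoc] using
      (((hasDerivAt_id t).const_mul (α ^ 2 - 3 * β ^ 2)).const_add x).const_mul α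
  have h2 : HasDerivAt (fun t' : ℝ => β * (x + (3 * α ^ 2 - β ^ 2) * t'))
      (β * (3 * α ^ 2 - β ^ 2)) t := by
    simpa [mul_assoc] using
      (((hasDerivAt_id t).const_mul (3 * α ^ 2 - β ^ 2)).const_add x).const_mul β
  have hs : HasDerivAt (fun t' => Real.sin (α * (x + (α ^ 2 - 3 * β ^ 2) * t')))
      (C α β t x * (α * (α ^ 2 - 3 * β ^ 2))) t := by
    simpa [C] using h1.sin
  have hh : HasDerivAt (fun t' => Real.cosh (β * (x + (3 * α ^ 2 - β ^ 2) * t')))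
      (SH α β t x * (β * (3 * α ^ 2 - β ^ 2))) t := by
    simpa [SH] using h2.cosh
  have hu : HasDerivAt (fun t' => (β / α) *
        Real.sin (α * (x + (α ^ 2 - 3 * β ^ 2) * t')) /
        Real.cosh (β * (x + (3 * α ^ 2 - β ^ 2) * t')))
      (((β / α) * (C α β t x * (α * (α ^ 2 - 3 * β ^ 2))) * H α β t x -
        (β / α) * S α β t x * (SH α β t x * (β * (3 * α ^ 2 - β ^ 2)))) /
        H α β t x ^ 2) t := by
    have := (hs.const_mul (β / α)).div hh (by unfold H at hH0; exact hH0.ne')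
    refine this.congr_deriv ?_
    simp [S, H]
  have ha := (Real.hasDerivAt_arctan _).comp t hu
  have h := ha.const_mul (2 * Real.sqrt 2)
  rw [show (fun t' => tildeB α β t' x) = fun t' =>
      2 * Real.sqrt 2 * Real.arctan ((β / α) *
        Real.sin (α * (x + (α ^ 2 - 3 * β ^ 2) * t')) /
        Real.cosh (β * (x + (3 * α ^ 2 - β ^ 2) * t'))) from rfl]
  refine h.congr_deriv ?_
  symm
  unfold Tv D
  have hD0 := (hD_pos α β t x hα).ne'
  simp only [S, H] at *
  field_simp

end MKdVAux

open MKdVAux in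
theorem breather_integrated_mkdv (α β : ℝ) (hα : 0 < α) (hβ : 0 < β) (t x : ℝ) :
    deriv (deriv (breather α β t)) x
      + deriv (fun t' : ℝ => tildeB α β t' x) t
      + (breather α β t x) ^ 3 = 0 := by
  have hB : breather α β t = fun y => Bv α β t y :=
    funext fun y => (hasDerivAt_tildeB_x α β t y hα).deriv
  have hB1 : deriv (fun y => Bv α β t y) = fun y => B1v α β t y :=
    funext fun y => (hasDerivAt_Bv α β t y hα).deriv
  rw [hB, hB1, (hasDerivAt_B1v α β t x hα).deriv, (hasDerivAt_tildeB_t α β t x hα).deriv]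
  have hD0 := (hD_pos α β t x hα).ne'
  have hC2 : C α β t x ^ 2 = 1 - S α β t x ^ 2 := by
    have := Real.sin_sq_add_cos_sq (α * (x + (α ^ 2 - 3 * β ^ 2) * t))
    unfold S C; linarith
  have hH2 : H α β t x ^ 2 = 1 + SH α β t x ^ 2 := by
    have := Real.cosh_sq (β * (x + (3 * α ^ 2 - β ^ 2) * t))
    unfold H SH; linarith
  have hr2 : Real.sqrt 2 ^ 2 = 2 := Real.sq_sqrt (by norm_num)
  simp only [B2v, Tv, Bv, B1v, Nxx, Dxx, Nx, Dx, N, D]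
  set s := S α β t x with hs
  set c := C α β t x with hc
  set h := H α β t x with hh
  set sh := SH α β t x with hsh
  set r := Real.sqrt 2 with hrr
  have hD0' : α ^ 2 * h ^ 2 + β ^ 2 * s ^ 2 ≠ 0 := by
    unfold D at hD0; exact hD0
  field_simp
  ring_nf
  have hc3 : c ^ 3 = (1 - s ^ 2) * c := by linear_combination c * hC2
  have hr3 : r ^ 3 = 2 * r := by rw [show r ^ 3 = r ^ 2 * r by ring, hr2]
  have hh2 : h ^ 2 = (1 + sh ^ 2) ^ 1 := by rw [show h ^ 2 = (h ^ 2) ^ 1 by ring, hH2]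
  have hh3 : h ^ 3 = (1 + sh ^ 2) ^ 1 * h := by rw [show h ^ 3 = (h ^ 2) ^ 1 * h by ring, hH2]
  have hh4 : h ^ 4 = (1 + sh ^ 2) ^ 2 := by rw [show h ^ 4 = (h ^ 2) ^ 2 by ring, hH2]
  have hh5 : h ^ 5 = (1 + sh ^ 2) ^ 2 * h := by rw [show h ^ 5 = (h ^ 2) ^ 2 * h by ring, hH2]
  have hh6 : h ^ 6 = (1 + sh ^ 2) ^ 3 := by rw [show h ^ 6 = (h ^ 2) ^ 3 by ring, hH2]
  have hh7 : h ^ 7 = (1 + sh ^ 2) ^ 3 * h := by rw [show h ^ 7 = (h ^ 2) ^ 3 * h by ring, hH2]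
  have hh8 : h ^ 8 = (1 + sh ^ 2) ^ 4 := by rw [show h ^ 8 = (h ^ 2) ^ 4 by ring, hH2]
  have hh9 : h ^ 9 = (1 + sh ^ 2) ^ 4 * h := by rw [show h ^ 9 = (h ^ 2) ^ 4 * h by ring, hH2]
  have hh10 : h ^ 10 = (1 + sh ^ 2) ^ 5 := by rw [show h ^ 10 = (h ^ 2) ^ 5 by ring, hH2]
  have hh11 : h ^ 11 = (1 + sh ^ 2) ^ 5 * h := by rw [show h ^ 11 = (h ^ 2) ^ 5 * h by ring, hH2]
  have hh12 : h ^ 12 = (1 + sh ^ 2) ^ 6 := by rw [show h ^ 12 = (h ^ 2) ^ 6 by ring, hH2]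
  have hh13 : h ^ 13 = (1 + sh ^ 2) ^ 6 * h := by rw [show h ^ 13 = (h ^ 2) ^ 6 * h by ring, hH2]
  have hh14 : h ^ 14 = (1 + sh ^ 2) ^ 7 := by rw [show h ^ 14 = (h ^ 2) ^ 7 by ring, hH2]
  simp only [hc3, hC2, hr3, hr2, hh14, hh13, hh12, hh11, hh10, hh9, hh8, hh7, hh6, hh5, hh4, hh3, hh2]
  ring
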